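/- Work in the field ℚ(q) of rational functions in one variable q over ℚ. For every integer m ≥ 1, one has ∑_{k=0}^{m} (−1)^k [m,k]_q · ( ∑_{l=0}^{k−1} q^{(m+1)(k−1) − 2l} ) = q^{−m} (q − q^{−1})^{−1} · ∏_{j=1}^{m} (1 − q^{2j}). -/

import Mathlib

noncomputable def q : RatFunc ℚ := RatFunc.X

/-- The balanced Gaussian binomial coefficient `[m, k]_q` in `ℚ(q)`. -/
noncomputable def qbinom (m k : ℕ) : RatFunc ℚ :=
  ∏ j ∈ Finset.range k,
    (q ^ ((m : ℤ) - k + j + 1) - q ^ (-((m : ℤ) - k + j + 1))) /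
      (q ^ ((j : ℤ) + 1) - q ^ (-((j : ℤ) + 1)))

lemma q_ne_zero : q ≠ 0 := RatFunc.X_ne_zero

lemma q_pow_ne_one {n : ℕ} (hn : 0 < n) : q ^ n ≠ 1 := by
  intro h
  have heq : (algebraMap (Polynomial ℚ) (RatFunc ℚ)) (Polynomial.X ^ n) =
      (algebraMap (Polynomial ℚ) (RatFunc ℚ)) 1 := by
    simpa [q] using h
  have h1 : (Polynomial.X ^ n : Polynomial ℚ) = 1 := RatFunc.algebraMap_injective ℚ heq
  have := congrArg Polynomial.natDegree h1
  simp [Polynomial.natDegree_X_pow] at this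
  omega

noncomputable def D (a : ℕ) : RatFunc ℚ := q ^ (a : ℤ) - q ^ (-(a : ℤ))

lemma D_ne_zero {a : ℕ} (ha : 0 < a) : D a ≠ 0 := by
  intro h
  have h2 : q ^ (a : ℤ) = q ^ (-(a : ℤ)) := by rw [D, sub_eq_zero] at h; exact h
  have h3 : q ^ (2 * a) = 1 := by
    have := congrArg (· * q ^ (a : ℤ)) h2
    simp only [← zpow_add₀ q_ne_zero, neg_add_cancel, zpow_zero] at this
    rw [← zpow_natCast]
    push_cast
    rw [two_mul]
    exact this
  exact q_pow_ne_one (by omega) h3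

noncomputable def qfact (m : ℕ) : RatFunc ℚ := ∏ j ∈ Finset.range m, D (j + 1)

lemma qfact_ne_zero (m : ℕ) : qfact m ≠ 0 :=
  Finset.prod_ne_zero_iff.2 fun j _ => D_ne_zero (Nat.succ_pos j)


lemma qbinom_fact (a b : ℕ) : qbinom (a + b) b = qfact (a + b) / (qfact b * qfact a) := by
  have hnum : ∀ j ∈ Finset.range b,
      (q ^ ((a + b : ℕ) - (b : ℤ) + j + 1) - q ^ (-((a + b : ℕ) - (b : ℤ) + j + 1))) = D (a + j + 1) := by
    intro j _
    have : ((a + b : ℕ) : ℤ) - (b : ℤ) + j + 1 = ((a + j + 1 : ℕ) : ℤ) := by push_cast; ring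
    rw [D, this]
  have hden : ∀ j ∈ Finset.range b,
      (q ^ ((j : ℤ) + 1) - q ^ (-((j : ℤ) + 1))) = D (j + 1) := by
    intro j _
    have : (j : ℤ) + 1 = ((j + 1 : ℕ) : ℤ) := by push_cast; ring
    rw [D, this]
  rw [qbinom]
  rw [Finset.prod_congr rfl (fun j hj => by rw [hnum j hj, hden j hj])]
  rw [Finset.prod_div_distrib]
  have h1 : qfact (a + b) = qfact a * ∏ j ∈ Finset.range b, D (a + j + 1) := by
    rw [qfact, qfact, Finset.prod_range_add]
  rw [h1]
  rw [show (∏ j ∈ Finset.range b, D (j + 1)) = qfact b from rfl]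
  rw [div_eq_div_iff (qfact_ne_zero b) (mul_ne_zero (qfact_ne_zero b) (qfact_ne_zero a))]
  ring

lemma qbinom_zero (m : ℕ) : qbinom m 0 = 1 := by simp [qbinom]

lemma Dcast (j : ℕ) : q ^ ((j : ℤ) + 1) - q ^ (-((j : ℤ) + 1)) = D (j + 1) := by
  rw [D]; push_cast; ring_nf

lemma qbinom_self (m : ℕ) : qbinom m m = 1 := by
  rw [qbinom]
  apply Finset.prod_eq_one
  intro j _
  have h : (m : ℤ) - m + j + 1 = (j : ℤ) + 1 := by ring
  rw [h, div_self]
  rw [Dcast]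
  exact D_ne_zero (Nat.succ_pos j)

lemma qbinom_overflow (m : ℕ) : qbinom m (m + 1) = 0 := by
  rw [qbinom]
  apply Finset.prod_eq_zero (Finset.mem_range.2 (Nat.zero_lt_succ m))
  have : (m : ℤ) - (m + 1 : ℕ) + (0 : ℕ) + 1 = 0 := by push_cast; ring
  rw [this]
  simp

lemma D_split (c b : ℕ) :
    D (c + b + 2) = q ^ ((b : ℤ) + 1) * D (c + 1) + q ^ (-((c : ℤ) + 1)) * D (b + 1) := by
  simp only [D]
  push_cast
  have hq := q_ne_zero
  have h1 : q ^ (((c : ℤ) + 1) + ((b : ℤ) + 1)) = q ^ ((c : ℤ) + 1) * q ^ ((b : ℤ) + 1) :=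
    zpow_add₀ hq _ _
  have h2 : q ^ (-(((c : ℤ) + 1) + ((b : ℤ) + 1))) =
      (q ^ ((c : ℤ) + 1))⁻¹ * (q ^ ((b : ℤ) + 1))⁻¹ := by
    rw [neg_add, zpow_add₀ hq, zpow_neg, zpow_neg]
  have h3 : q ^ (-((c : ℤ) + 1)) = (q ^ ((c : ℤ) + 1))⁻¹ := zpow_neg q _
  have h4 : q ^ (-((b : ℤ) + 1)) = (q ^ ((b : ℤ) + 1))⁻¹ := zpow_neg q _
  rw [show ((c : ℤ) + (b : ℤ) + 2) = (((c : ℤ) + 1) + ((b : ℤ) + 1)) by ring]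
  rw [h1, h2, h3, h4]
  have hA : q ^ ((c : ℤ) + 1) ≠ 0 := zpow_ne_zero _ hq
  have hB : q ^ ((b : ℤ) + 1) ≠ 0 := zpow_ne_zero _ hq
  field_simp
  ring

lemma pascal' (c b : ℕ) :
    qbinom (c + b + 2) (b + 1) =
      q ^ ((b : ℤ) + 1) * qbinom (c + b + 1) (b + 1) +
        q ^ (-((c : ℤ) + 1)) * qbinom (c + b + 1) b := by
  rw [show c + b + 2 = (c + 1) + (b + 1) by omega, qbinom_fact]
  rw [show c + b + 1 = c + (b + 1) by omega, qbinom_fact]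
  rw [show c + (b + 1) = (c + 1) + b by omega, qbinom_fact]
  have e1 : qfact ((c + 1) + (b + 1)) = qfact (c + b + 1) * D (c + b + 2) := by
    rw [show (c + 1) + (b + 1) = (c + b + 1) + 1 by omega, qfact, qfact, Finset.prod_range_succ]
  have e2 : qfact (b + 1) = qfact b * D (b + 1) := by
    rw [qfact, qfact, Finset.prod_range_succ]
  have e3 : qfact (c + 1) = qfact c * D (c + 1) := by
    rw [qfact, qfact, Finset.prod_range_succ]
  have e4 : qfact ((c + 1) + b) = qfact (c + b + 1) := by rw [show (c+1)+b = c+b+1 by omega]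
  rw [e1, e2, e3, e4, D_split]
  have hb := qfact_ne_zero b
  have hc := qfact_ne_zero c
  have hDb : D (b + 1) ≠ 0 := D_ne_zero (Nat.succ_pos b)
  have hDc : D (c + 1) ≠ 0 := D_ne_zero (Nat.succ_pos c)
  field_simp

lemma qpow_mul (a b c : ℤ) (h : a + b = c) : q ^ a * q ^ b = q ^ c := by
  rw [← h]; exact (zpow_add₀ q_ne_zero a b).symm

lemma sum_mul_one_sub (m : ℕ) (f g : ℕ → RatFunc ℚ) (z : RatFunc ℚ)
    (h0 : f 0 = g 0) (hmid : ∀ k < m, f (k + 1) = g (k + 1) - g k)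
    (hlast : f (m + 1) = -g m) :
    ∑ k ∈ Finset.range (m + 2), f k * z ^ k
      = (∑ k ∈ Finset.range (m + 1), g k * z ^ k) * (1 - z) := by
  rw [mul_one_sub, Finset.sum_mul]
  rw [Finset.sum_range_succ' (fun k => f k * z ^ k) (m + 1)]
  rw [Finset.sum_range_succ (fun k => f (k + 1) * z ^ (k + 1)) m]
  rw [Finset.sum_range_succ' (fun k => g k * z ^ k) m]
  rw [Finset.sum_range_succ (fun k => g k * z ^ k * z) m]
  have hc : ∀ k ∈ Finset.range m,
      f (k + 1) * z ^ (k + 1) = g (k + 1) * z ^ (k + 1) - g k * z ^ k * z := by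
    intro k hk
    rw [hmid k (Finset.mem_range.1 hk)]
    ring
  rw [Finset.sum_congr rfl hc, Finset.sum_sub_distrib, h0, hlast]
  ring

lemma gauss (m : ℕ) (z : RatFunc ℚ) :
    ∑ k ∈ Finset.range (m + 1),
        (-1 : RatFunc ℚ) ^ k * q ^ ((k : ℤ) * ((m : ℤ) - 1)) * qbinom m k * z ^ k
      = ∏ j ∈ Finset.range m, (1 - z * q ^ (2 * (j : ℤ))) := by
  induction m generalizing z with
  | zero => simp [qbinom_zero]
  | succ m ih =>
    have hrhs : ∏ j ∈ Finset.range (m + 1), (1 - z * q ^ (2 * (j : ℤ)))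
        = (∏ j ∈ Finset.range m, (1 - (z * q ^ (2 : ℤ)) * q ^ (2 * (j : ℤ)))) * (1 - z) := by
      rw [Finset.prod_range_succ']
      congr 1
      · apply Finset.prod_congr rfl
        intro j _
        congr 1
        push_cast
        rw [mul_assoc, qpow_mul 2 (2 * j) (2 * ((j : ℤ) + 1)) (by ring)]
      · norm_num
    rw [hrhs, ← ih (z * q ^ (2 : ℤ))]
    have hterm : ∀ k ∈ Finset.range (m + 1),
        (-1 : RatFunc ℚ) ^ k * q ^ ((k : ℤ) * ((m : ℤ) - 1)) * qbinom m k * (z * q ^ (2 : ℤ)) ^ k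
          = ((-1 : RatFunc ℚ) ^ k * q ^ ((k : ℤ) * ((m : ℤ) + 1)) * qbinom m k) * z ^ k := by
      intro k _
      rw [mul_pow, ← zpow_natCast (q ^ (2 : ℤ)) k, ← zpow_mul]
      have h := qpow_mul ((k : ℤ) * ((m : ℤ) - 1)) (2 * k) ((k : ℤ) * ((m : ℤ) + 1)) (by ring)
      calc (-1 : RatFunc ℚ) ^ k * q ^ ((k : ℤ) * ((m : ℤ) - 1)) * qbinom m k * (z ^ k * q ^ ((2 : ℤ) * k))
          = (-1 : RatFunc ℚ) ^ k * (q ^ ((k : ℤ) * ((m : ℤ) - 1)) * q ^ ((2 : ℤ) * k)) * qbinom m k * z ^ k := by ring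
        _ = ((-1 : RatFunc ℚ) ^ k * q ^ ((k : ℤ) * ((m : ℤ) + 1)) * qbinom m k) * z ^ k := by rw [h]
    rw [Finset.sum_congr rfl hterm]
    apply sum_mul_one_sub m
      (fun k => (-1 : RatFunc ℚ) ^ k * q ^ ((k : ℤ) * (((m : ℕ) + 1 : ℤ) - 1)) * qbinom (m + 1) k)
      (fun k => (-1 : RatFunc ℚ) ^ k * q ^ ((k : ℤ) * ((m : ℤ) + 1)) * qbinom m k)
    · simp [qbinom_zero]
    · intro k hk
      obtain ⟨d, rfl⟩ : ∃ d, m = d + k + 1 := ⟨m - k - 1, by omega⟩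
      rw [show d + k + 1 + 1 = d + k + 2 from rfl, pascal' d k]
      push_cast
      have h1 := qpow_mul (((k : ℤ) + 1) * ((d : ℤ) + (k : ℤ) + 1 + 1 - 1)) ((k : ℤ) + 1)
        (((k : ℤ) + 1) * ((d : ℤ) + (k : ℤ) + 1 + 1)) (by ring)
      have h2 := qpow_mul (((k : ℤ) + 1) * ((d : ℤ) + (k : ℤ) + 1 + 1 - 1)) (-((d : ℤ) + 1))
        ((k : ℤ) * ((d : ℤ) + (k : ℤ) + 1 + 1)) (by ring)
      linear_combination ((-1 : RatFunc ℚ) ^ (k + 1) * qbinom (d + k + 1) (k + 1)) * h1 +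
        ((-1 : RatFunc ℚ) ^ (k + 1) * qbinom (d + k + 1) k) * h2
    · rw [qbinom_self, qbinom_self]
      push_cast
      rw [mul_one, mul_one, show ((m : ℤ) + 1) * ((m : ℤ) + 1 - 1) = (m : ℤ) * ((m : ℤ) + 1) by ring]
      rw [pow_succ]
      ring

lemma q_sub_inv_ne_zero : q - q⁻¹ ≠ 0 := by
  have h := D_ne_zero (a := 1) one_pos
  rw [D] at h
  simpa using h

lemma key_geom (a : ℤ) (k : ℕ) :
    (q - q⁻¹) * ∑ l ∈ Finset.range k, q ^ (a - 2 * (l : ℤ))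
      = q ^ (a + 1) - q ^ (a + 1 - 2 * (k : ℤ)) := by
  rw [Finset.mul_sum]
  have hterm : ∀ l ∈ Finset.range k,
      (q - q⁻¹) * q ^ (a - 2 * (l : ℤ))
        = (fun l : ℕ => q ^ (a + 1 - 2 * (l : ℤ))) l
          - (fun l : ℕ => q ^ (a + 1 - 2 * (l : ℤ))) (l + 1) := by
    intro l _
    simp only []
    have hA : q * q ^ (a - 2 * (l : ℤ)) = q ^ (a + 1 - 2 * (l : ℤ)) := by
      have h := qpow_mul 1 (a - 2 * (l : ℤ)) (a + 1 - 2 * (l : ℤ)) (by ring)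
      rwa [zpow_one] at h
    have hB : q⁻¹ * q ^ (a - 2 * (l : ℤ)) = q ^ (a + 1 - 2 * ((l : ℤ) + 1)) := by
      have h := qpow_mul (-1) (a - 2 * (l : ℤ)) (a + 1 - 2 * ((l : ℤ) + 1)) (by ring)
      rwa [zpow_neg_one] at h
    push_cast
    linear_combination hA - hB
  rw [Finset.sum_congr rfl hterm, Finset.sum_range_sub']
  push_cast
  ring_nf

/-- The closed evaluation of the double sum computing the coefficient `a_i`
(equation (3.29)) in the proof of Theorem 3.3. -/
theorem stmt_7 (m : ℕ) (hm : 1 ≤ m) :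
    ∑ k ∈ Finset.range (m + 1),
        (-1 : RatFunc ℚ) ^ k * qbinom m k *
          (∑ l ∈ Finset.range k,
            q ^ (((m : ℤ) + 1) * ((k : ℤ) - 1) - 2 * l)) =
      q ^ (-(m : ℤ)) * (q - q⁻¹)⁻¹ *
        ∏ j ∈ Finset.range m, (1 - q ^ (2 * ((j : ℤ) + 1))) := by
  have hC := q_sub_inv_ne_zero
  have hterm : ∀ k ∈ Finset.range (m + 1),
      (-1 : RatFunc ℚ) ^ k * qbinom m k *
          (∑ l ∈ Finset.range k, q ^ (((m : ℤ) + 1) * ((k : ℤ) - 1) - 2 * l))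
        = (q ^ (-(m : ℤ)) * (q - q⁻¹)⁻¹) *
            (((-1 : RatFunc ℚ) ^ k * q ^ ((k : ℤ) * ((m : ℤ) - 1)) * qbinom m k * (q ^ (2 : ℤ)) ^ k)
              - ((-1 : RatFunc ℚ) ^ k * q ^ ((k : ℤ) * ((m : ℤ) - 1)) * qbinom m k * (1 : RatFunc ℚ) ^ k)) := by
    intro k _
    have hgeo := key_geom (((m : ℤ) + 1) * ((k : ℤ) - 1)) k
    have hq2k : (q ^ (2 : ℤ)) ^ k = q ^ ((2 : ℤ) * k) := by
      rw [← zpow_natCast (q ^ (2 : ℤ)) k, ← zpow_mul]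
    have h1 : q ^ ((k : ℤ) * ((m : ℤ) - 1)) * q ^ ((2 : ℤ) * k) * q ^ (-(m : ℤ))
        = q ^ (((m : ℤ) + 1) * ((k : ℤ) - 1) + 1) := by
      rw [qpow_mul ((k : ℤ) * ((m : ℤ) - 1)) ((2 : ℤ) * k) ((k : ℤ) * ((m : ℤ) + 1)) (by ring)]
      exact qpow_mul _ _ _ (by ring)
    have h2 : q ^ ((k : ℤ) * ((m : ℤ) - 1)) * q ^ (-(m : ℤ))
        = q ^ (((m : ℤ) + 1) * ((k : ℤ) - 1) + 1 - 2 * (k : ℤ)) := qpow_mul _ _ _ (by ring)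
    rw [hq2k, one_pow]
    have hsum : (∑ l ∈ Finset.range k, q ^ (((m : ℤ) + 1) * ((k : ℤ) - 1) - 2 * l))
        = (q - q⁻¹)⁻¹ * (q ^ (((m : ℤ) + 1) * ((k : ℤ) - 1) + 1)
            - q ^ (((m : ℤ) + 1) * ((k : ℤ) - 1) + 1 - 2 * (k : ℤ))) := by
      rw [← hgeo, ← mul_assoc, inv_mul_cancel₀ hC, one_mul]
    rw [hsum]
    linear_combination ((-1 : RatFunc ℚ) ^ k * qbinom m k * (q - q⁻¹)⁻¹) * h2
      - ((-1 : RatFunc ℚ) ^ k * qbinom m k * (q - q⁻¹)⁻¹) * h1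
  rw [Finset.sum_congr rfl hterm, ← Finset.mul_sum, Finset.sum_sub_distrib]
  rw [gauss m (q ^ (2 : ℤ)), gauss m 1]
  have hz : ∏ j ∈ Finset.range m, (1 - 1 * q ^ (2 * (j : ℤ))) = 0 := by
    apply Finset.prod_eq_zero (Finset.mem_range.2 (by omega : 0 < m))
    norm_num
  rw [hz, sub_zero]
  have hp : ∏ j ∈ Finset.range m, (1 - q ^ (2 : ℤ) * q ^ (2 * (j : ℤ)))
      = ∏ j ∈ Finset.range m, (1 - q ^ (2 * ((j : ℤ) + 1))) := by
    apply Finset.prod_congr rfl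
    intro j _
    rw [qpow_mul 2 (2 * j) (2 * ((j : ℤ) + 1)) (by ring)]
  rw [hp]
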